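/- Let (φ^k)_{k≥0} be a sequence of real polynomials with deg φ^k = k that is orthogonal on [−1,1]. Let p ≥ 0, |q| ≤ p, and k = (k1,k2,k3). If (k3 + p + |q|) is odd, or (k1 + k2 + |q|) is odd, or (q = 0 and at least one of k1, k2 is odd), then I_m(p,q,k) = ∫_{[−1,1]³} T_{p,m}^q(x1,x2,x3) φ^{k1}(x1) φ^{k2}(x2) φ^{k3}(x3) dx = 0 for every integer m ≥ 0. -/

import Mathlib

open Polynomial MeasureTheory

/-- The Cartesian polynomial `T_{p,m}^q(x,y,z)`, the complex conjugate of
`R_{p,m}^q(x) = ‖x‖^{2m+p} Y_p^q(x/‖x‖) / C_Y(p,q)` (a regular solid harmonic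
weighted by `‖x‖^{2m}`). Here `s = 1` if `q ≥ 0` and `s = -1` if `q < 0`. -/
noncomputable def solidT (p m : ℕ) (q : ℤ) (x y z : ℝ) : ℂ :=
  ((-1 : ℂ) ^ q.natAbs / 2 ^ p) *
    ((x : ℂ) - (if 0 ≤ q then (1 : ℂ) else -1) * Complex.I * (y : ℂ)) ^ q.natAbs *
    ∑ ν ∈ Finset.range ((p - q.natAbs) / 2 + 1),
      ((-1 : ℂ) ^ ν * (Nat.factorial (2 * p - 2 * ν) : ℂ) /
          ((Nat.factorial ν : ℂ) * (Nat.factorial (p - ν) : ℂ) *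
            (Nat.factorial (p - q.natAbs - 2 * ν) : ℂ))) *
        (((x ^ 2 + y ^ 2 + z ^ 2 : ℝ) : ℂ)) ^ (m + ν) * (z : ℂ) ^ (p - q.natAbs - 2 * ν)

/-- The integral `I_m(p,q,k) = ∫_{[-1,1]³} T_{p,m}^q(x₁,x₂,x₃) φ^{k₁}(x₁) φ^{k₂}(x₂) φ^{k₃}(x₃) dx`. -/
noncomputable def solidI (φ : ℕ → Polynomial ℝ) (p m : ℕ) (q : ℤ) (k₁ k₂ k₃ : ℕ) : ℂ :=
  ∫ x₁ in (-1:ℝ)..1, ∫ x₂ in (-1:ℝ)..1, ∫ x₃ in (-1:ℝ)..1,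
    solidT p m q x₁ x₂ x₃ *
      (((φ k₁).eval x₁ * (φ k₂).eval x₂ * (φ k₃).eval x₃ : ℝ) : ℂ)



set_option linter.unnecessarySimpa false in
lemma integral_comp_neg_sym {E : Type*} [NormedAddCommGroup E] [NormedSpace ℝ E] (f : ℝ → E) :
    (∫ x in (-1:ℝ)..1, f (-x)) = ∫ x in (-1:ℝ)..1, f x := by
  simpa using intervalIntegral.integral_comp_neg (a := (-1:ℝ)) (b := 1) (f := f)

lemma integral_zero_of_odd (f : ℝ → ℂ) (h : ∀ x, f (-x) = -f x) :
    ∫ x in (-1:ℝ)..1, f x = 0 := by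
  have h1 := integral_comp_neg_sym f
  simp only [h, intervalIntegral.integral_neg] at h1
  linear_combination (-(1:ℂ)/2) * h1

lemma poly_intInt (r s : Polynomial ℝ) :
    IntervalIntegrable (fun ζ => r.eval ζ * s.eval ζ) volume (-1) 1 :=
  (r.continuous.mul s.continuous).intervalIntegrable _ _

lemma ortho_low (φ : ℕ → Polynomial ℝ)
    (hdeg : ∀ k : ℕ, (φ k).degree = k)
    (horth : ∀ j k : ℕ, j ≠ k →
      ∫ ζ in (-1:ℝ)..1, (φ j).eval ζ * (φ k).eval ζ = 0) :
    ∀ (N : ℕ) (r : Polynomial ℝ) (n : ℕ), r.natDegree ≤ N → r.degree < n →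
      ∫ ζ in (-1:ℝ)..1, (φ n).eval ζ * r.eval ζ = 0 := by
  intro N
  induction N using Nat.strong_induction_on with
  | _ N IH =>
    intro r n hN hrn
    by_cases hr : r = 0
    · simp [hr]
    · set d := r.natDegree with hd
      have hφd : (φ d).degree = d := hdeg d
      have hφd0 : φ d ≠ 0 := fun h => by simp [h] at hφd
      have hφdnat : (φ d).natDegree = d := natDegree_eq_of_degree_eq_some hφd
      have hlcφ : (φ d).leadingCoeff ≠ 0 := leadingCoeff_ne_zero.mpr hφd0
      set c : ℝ := r.leadingCoeff / (φ d).leadingCoeff with hc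
      have hc0 : c ≠ 0 := div_ne_zero (leadingCoeff_ne_zero.mpr hr) hlcφ
      set r' : Polynomial ℝ := r - C c * φ d with hr'
      have hdegr : r.degree = d := degree_eq_natDegree hr
      have hdegC : (C c * φ d).degree = d := by
        rw [degree_C_mul hc0, hφd]
      have hlc : (C c * φ d).leadingCoeff = r.leadingCoeff := by
        rw [leadingCoeff_mul, leadingCoeff_C, hc, div_mul_cancel₀ _ hlcφ]
      have hr'lt : r'.degree < r.degree :=
        degree_sub_lt (by rw [hdegr, hdegC]) hr hlc.symm
      have hdn : d < n := by
        have := hrn; rw [hdegr] at this; exact_mod_cast this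
      have hsplit : ∀ ζ : ℝ, (φ n).eval ζ * r.eval ζ =
          c * ((φ n).eval ζ * (φ d).eval ζ) + (φ n).eval ζ * r'.eval ζ := by
        intro ζ
        have : r = C c * φ d + r' := by rw [hr']; ring
        rw [this]; simp; ring
      have hint1 : IntervalIntegrable (fun ζ => c * ((φ n).eval ζ * (φ d).eval ζ))
          volume (-1) 1 := (poly_intInt (φ n) (φ d)).const_mul c
      have hint2 := poly_intInt (φ n) r'
      have hIr' : ∫ ζ in (-1:ℝ)..1, (φ n).eval ζ * r'.eval ζ = 0 := by
        by_cases h0 : r' = 0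
        · simp [h0]
        · have hlt : r'.natDegree < r.natDegree := natDegree_lt_natDegree h0 hr'lt
          exact IH r'.natDegree (lt_of_lt_of_le hlt hN) r' n le_rfl
            (lt_trans hr'lt hrn)
      calc ∫ ζ in (-1:ℝ)..1, (φ n).eval ζ * r.eval ζ
          = ∫ ζ in (-1:ℝ)..1, (c * ((φ n).eval ζ * (φ d).eval ζ) +
              (φ n).eval ζ * r'.eval ζ) := by
            simp only [hsplit]
        _ = (∫ ζ in (-1:ℝ)..1, c * ((φ n).eval ζ * (φ d).eval ζ)) +
              ∫ ζ in (-1:ℝ)..1, (φ n).eval ζ * r'.eval ζ :=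
            intervalIntegral.integral_add hint1 hint2
        _ = 0 := by
            rw [intervalIntegral.integral_const_mul, horth n d (Nat.ne_of_gt hdn), hIr']
            ring

lemma ortho_low' (φ : ℕ → Polynomial ℝ)
    (hdeg : ∀ k : ℕ, (φ k).degree = k)
    (horth : ∀ j k : ℕ, j ≠ k →
      ∫ ζ in (-1:ℝ)..1, (φ j).eval ζ * (φ k).eval ζ = 0)
    (r : Polynomial ℝ) (n : ℕ) (h : r.degree < n) :
    ∫ ζ in (-1:ℝ)..1, (φ n).eval ζ * r.eval ζ = 0 :=
  ortho_low φ hdeg horth r.natDegree r n le_rfl h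

lemma comp_negX_eval (r : Polynomial ℝ) (x : ℝ) : (r.comp (-X)).eval x = r.eval (-x) := by
  simp [eval_comp]

lemma comp_negX_natDegree (r : Polynomial ℝ) : (r.comp (-X)).natDegree = r.natDegree := by
  rw [natDegree_comp]; simp

lemma comp_negX_leadingCoeff (r : Polynomial ℝ) :
    (r.comp (-X)).leadingCoeff = r.leadingCoeff * (-1) ^ r.natDegree := by
  rw [leadingCoeff_comp (by simp)]
  simp

lemma comp_negX_ne_zero (r : Polynomial ℝ) (hr : r ≠ 0) : r.comp (-X) ≠ 0 := by
  intro h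
  have h2 := comp_negX_leadingCoeff r
  rw [h, leadingCoeff_zero] at h2
  have hne : ((-1:ℝ) ^ r.natDegree) ≠ 0 := pow_ne_zero _ (by norm_num)
  have hlc : r.leadingCoeff = 0 := by
    rcases mul_eq_zero.mp h2.symm with h3 | h3
    · exact h3
    · exact absurd h3 hne
  exact hr (leadingCoeff_eq_zero.mp hlc)

-- orthogonality of comp (-X) to low-degree polys
lemma ortho_low_neg (φ : ℕ → Polynomial ℝ)
    (hdeg : ∀ k : ℕ, (φ k).degree = k)
    (horth : ∀ j k : ℕ, j ≠ k →
      ∫ ζ in (-1:ℝ)..1, (φ j).eval ζ * (φ k).eval ζ = 0)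
    (r : Polynomial ℝ) (n : ℕ) (h : r.degree < n) :
    ∫ ζ in (-1:ℝ)..1, (φ n).eval (-ζ) * r.eval ζ = 0 := by
  set ρ := r.comp (-X) with hρ
  have hρdeg : ρ.degree < n := by
    by_cases h0 : r = 0
    · rw [hρ, h0, zero_comp, degree_zero]
      exact WithBot.bot_lt_coe n
    · have hρ0 : ρ ≠ 0 := comp_negX_ne_zero r h0
      rw [degree_eq_natDegree hρ0, comp_negX_natDegree, ← degree_eq_natDegree h0]
      exact h
  have key : ∀ ζ : ℝ, (fun ζ => (φ n).eval ζ * ρ.eval ζ) (-ζ) = (φ n).eval (-ζ) * r.eval ζ := by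
    intro ζ
    show (φ n).eval (-ζ) * ρ.eval (-ζ) = (φ n).eval (-ζ) * r.eval ζ
    rw [hρ, comp_negX_eval, neg_neg]
  calc ∫ ζ in (-1:ℝ)..1, (φ n).eval (-ζ) * r.eval ζ
      = ∫ ζ in (-1:ℝ)..1, (fun ζ => (φ n).eval ζ * ρ.eval ζ) (-ζ) := by
        simp only [key]
    _ = ∫ ζ in (-1:ℝ)..1, (φ n).eval ζ * ρ.eval ζ :=
        integral_comp_neg_sym (fun ζ => (φ n).eval ζ * ρ.eval ζ)
    _ = 0 := ortho_low' φ hdeg horth ρ n hρdeg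

lemma phi_parity (φ : ℕ → Polynomial ℝ)
    (hdeg : ∀ k : ℕ, (φ k).degree = k)
    (horth : ∀ j k : ℕ, j ≠ k →
      ∫ ζ in (-1:ℝ)..1, (φ j).eval ζ * (φ k).eval ζ = 0)
    (k : ℕ) (x : ℝ) : (φ k).eval (-x) = (-1:ℝ)^k * (φ k).eval x := by
  have hφk : (φ k).degree = k := hdeg k
  have hφ0 : φ k ≠ 0 := fun h => by simp [h] at hφk
  have hφnat : (φ k).natDegree = k := natDegree_eq_of_degree_eq_some hφk
  set ψ := (φ k).comp (-X) with hψdef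
  have hψ0 : ψ ≠ 0 := comp_negX_ne_zero _ hφ0
  have hψdeg : ψ.degree = k := by
    rw [degree_eq_natDegree hψ0, comp_negX_natDegree, hφnat]
  set δ := ψ - C ((-1:ℝ)^k) * φ k with hδdef
  -- degree of δ is < k
  have hCne : ((-1:ℝ)^k) ≠ 0 := by positivity
  have hdegC : (C ((-1:ℝ)^k) * φ k).degree = k := by rw [degree_C_mul hCne, hφk]
  have hlceq : ψ.leadingCoeff = (C ((-1:ℝ)^k) * φ k).leadingCoeff := by
    rw [comp_negX_leadingCoeff, leadingCoeff_mul, leadingCoeff_C, hφnat]; ring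
  have hδlt : δ.degree < k := by
    have := degree_sub_lt (by rw [hψdeg, hdegC]) hψ0 hlceq
    rwa [hψdeg] at this
  -- ∫ δ² = 0
  have hδψ : ∫ ζ in (-1:ℝ)..1, (φ k).eval (-ζ) * δ.eval ζ = 0 :=
    ortho_low_neg φ hdeg horth δ k hδlt
  have hδφ : ∫ ζ in (-1:ℝ)..1, (φ k).eval ζ * δ.eval ζ = 0 :=
    ortho_low' φ hdeg horth δ k hδlt
  have hsplit : ∀ ζ : ℝ, δ.eval ζ * δ.eval ζ =
      (φ k).eval (-ζ) * δ.eval ζ + (-((-1:ℝ)^k)) * ((φ k).eval ζ * δ.eval ζ) := by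
    intro ζ
    have h1 : δ.eval ζ = (φ k).eval (-ζ) - (-1:ℝ)^k * (φ k).eval ζ := by
      simp [hδdef, hψdef, comp_negX_eval]
    nth_rewrite 1 [h1]
    ring
  have hint1 : IntervalIntegrable (fun ζ => (φ k).eval (-ζ) * δ.eval ζ) volume (-1) 1 := by
    apply Continuous.intervalIntegrable
    exact ((φ k).continuous.comp continuous_neg).mul δ.continuous
  have hint2 : IntervalIntegrable
      (fun ζ => (-((-1:ℝ)^k)) * ((φ k).eval ζ * δ.eval ζ)) volume (-1) 1 :=
    (poly_intInt (φ k) δ).const_mul _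
  have hsq : ∫ ζ in (-1:ℝ)..1, δ.eval ζ * δ.eval ζ = 0 := by
    calc ∫ ζ in (-1:ℝ)..1, δ.eval ζ * δ.eval ζ
        = ∫ ζ in (-1:ℝ)..1, ((φ k).eval (-ζ) * δ.eval ζ +
            (-((-1:ℝ)^k)) * ((φ k).eval ζ * δ.eval ζ)) := by simp only [hsplit]
      _ = (∫ ζ in (-1:ℝ)..1, (φ k).eval (-ζ) * δ.eval ζ) +
            ∫ ζ in (-1:ℝ)..1, (-((-1:ℝ)^k)) * ((φ k).eval ζ * δ.eval ζ) :=
          intervalIntegral.integral_add hint1 hint2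
      _ = 0 := by rw [hδψ, intervalIntegral.integral_const_mul, hδφ]; ring
  -- δ vanishes on Ioo (-1) 1, hence δ = 0
  have hδ0 : δ = 0 := by
    have hfc : Continuous (fun ζ : ℝ => δ.eval ζ * δ.eval ζ) := δ.continuous.mul δ.continuous
    have hnn : 0 ≤ᵐ[(volume : Measure ℝ)] (fun ζ : ℝ => δ.eval ζ * δ.eval ζ) :=
      Filter.Eventually.of_forall fun ζ => mul_self_nonneg _
    have hfi : IntervalIntegrable (fun ζ : ℝ => δ.eval ζ * δ.eval ζ) volume (-1) 1 :=
      poly_intInt δ δ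
    have hnotpos : ¬ (0 < ∫ ζ in (-1:ℝ)..1, δ.eval ζ * δ.eval ζ) := by
      rw [hsq]; exact lt_irrefl 0
    rw [intervalIntegral.integral_pos_iff_support_of_nonneg_ae hnn hfi] at hnotpos
    push_neg at hnotpos
    have hvol : volume (Function.support (fun ζ : ℝ => δ.eval ζ * δ.eval ζ) ∩
        Set.Ioc (-1:ℝ) 1) = 0 := by
      have := hnotpos (by norm_num)
      exact le_antisymm this zero_le
    have hroot : ∀ ζ ∈ Set.Ioo (-1:ℝ) 1, δ.IsRoot ζ := by
      intro ζ hζ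
      by_contra hne
      have hmem : ζ ∈ Function.support (fun ζ : ℝ => δ.eval ζ * δ.eval ζ) ∩
          Set.Ioo (-1:ℝ) 1 := by
        refine ⟨?_, hζ⟩
        simp only [Function.mem_support]
        exact fun h => hne (by
          have := mul_self_eq_zero.mp h
          simpa [IsRoot] using this)
      have hopen : IsOpen (Function.support (fun ζ : ℝ => δ.eval ζ * δ.eval ζ) ∩
          Set.Ioo (-1:ℝ) 1) := (hfc.isOpen_support).inter isOpen_Ioo
      have hpos : (0:ENNReal) < volume (Function.support (fun ζ : ℝ => δ.eval ζ * δ.eval ζ) ∩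
          Set.Ioo (-1:ℝ) 1) := hopen.measure_pos volume ⟨ζ, hmem⟩
      have hle : volume ((Function.support fun ζ : ℝ => δ.eval ζ * δ.eval ζ) ∩
            Set.Ioo (-1:ℝ) 1) ≤
          volume ((Function.support fun ζ : ℝ => δ.eval ζ * δ.eval ζ) ∩ Set.Ioc (-1:ℝ) 1) :=
        measure_mono (Set.inter_subset_inter_right _ Set.Ioo_subset_Ioc_self)
      rw [hvol] at hle
      exact absurd (le_antisymm hle zero_le) (ne_of_gt hpos)
    apply eq_zero_of_infinite_isRoot
    apply Set.Infinite.mono (s := Set.Ioo (-1:ℝ) 1)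
    · exact fun ζ hζ => hroot ζ hζ
    · exact Set.Ioo_infinite (by norm_num)
  have : ψ = C ((-1:ℝ)^k) * φ k := by
    have := sub_eq_zero.mp hδ0
    exact this
  have := congrArg (Polynomial.eval x) this
  simpa [hψdef, comp_negX_eval] using this

lemma solidT_neg_z (p m : ℕ) (q : ℤ) (hq : q.natAbs ≤ p) (x y z : ℝ) :
    solidT p m q x y (-z) = (-1:ℂ) ^ (p + q.natAbs) * solidT p m q x y z := by
  unfold solidT
  have hsum : (∑ ν ∈ Finset.range ((p - q.natAbs) / 2 + 1),
      ((-1 : ℂ) ^ ν * (Nat.factorial (2 * p - 2 * ν) : ℂ) /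
          ((Nat.factorial ν : ℂ) * (Nat.factorial (p - ν) : ℂ) *
            (Nat.factorial (p - q.natAbs - 2 * ν) : ℂ))) *
        (((x ^ 2 + y ^ 2 + (-z) ^ 2 : ℝ) : ℂ)) ^ (m + ν) *
          ((-z : ℝ) : ℂ) ^ (p - q.natAbs - 2 * ν))
      = (-1:ℂ) ^ (p + q.natAbs) * ∑ ν ∈ Finset.range ((p - q.natAbs) / 2 + 1),
      ((-1 : ℂ) ^ ν * (Nat.factorial (2 * p - 2 * ν) : ℂ) /
          ((Nat.factorial ν : ℂ) * (Nat.factorial (p - ν) : ℂ) *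
            (Nat.factorial (p - q.natAbs - 2 * ν) : ℂ))) *
        (((x ^ 2 + y ^ 2 + z ^ 2 : ℝ) : ℂ)) ^ (m + ν) * (z : ℂ) ^ (p - q.natAbs - 2 * ν) := by
    rw [Finset.mul_sum]
    refine Finset.sum_congr rfl fun ν hν => ?_
    have h2ν : 2 * ν ≤ p - q.natAbs := by
      have := Finset.mem_range.mp hν; omega
    have hz : ((-z : ℝ) : ℂ) ^ (p - q.natAbs - 2 * ν)
        = (-1:ℂ) ^ (p + q.natAbs) * (z : ℂ) ^ (p - q.natAbs - 2 * ν) := by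
      have h1 : ((-z : ℝ) : ℂ) = -(z : ℂ) := by push_cast; ring
      rw [h1, neg_pow]
      have h2 : (-1:ℂ) ^ (p - q.natAbs - 2 * ν) = (-1:ℂ) ^ (p + q.natAbs) := by
        have hexp : p + q.natAbs = (p - q.natAbs - 2 * ν) + 2 * (q.natAbs + ν) := by omega
        rw [hexp, pow_add, pow_mul, neg_one_sq, one_pow, mul_one]
      rw [h2]
    have hsq : ((x ^ 2 + y ^ 2 + (-z) ^ 2 : ℝ) : ℂ) = ((x ^ 2 + y ^ 2 + z ^ 2 : ℝ) : ℂ) := by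
      norm_num
    rw [hz, hsq]; ring
  rw [hsum]; ring

lemma solidT_neg_xy (p m : ℕ) (q : ℤ) (x y z : ℝ) :
    solidT p m q (-x) (-y) z = (-1:ℂ) ^ q.natAbs * solidT p m q x y z := by
  unfold solidT
  have h1 : (((-x : ℝ) : ℂ) - (if 0 ≤ q then (1 : ℂ) else -1) * Complex.I * ((-y : ℝ) : ℂ))
      = -((x : ℂ) - (if 0 ≤ q then (1 : ℂ) else -1) * Complex.I * (y : ℂ)) := by
    push_cast; ring
  have hsq : (((-x) ^ 2 + (-y) ^ 2 + z ^ 2 : ℝ) : ℂ) = ((x ^ 2 + y ^ 2 + z ^ 2 : ℝ) : ℂ) := by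
    norm_num
  have h2 : (-((x : ℂ) - (if 0 ≤ q then (1 : ℂ) else -1) * Complex.I * (y : ℂ))) ^ q.natAbs
      = (-1:ℂ) ^ q.natAbs *
        ((x : ℂ) - (if 0 ≤ q then (1 : ℂ) else -1) * Complex.I * (y : ℂ)) ^ q.natAbs :=
    neg_pow _ _
  rw [h1, hsq, h2]
  ring

lemma solidT_q0_negx (p m : ℕ) (x y z : ℝ) :
    solidT p m 0 (-x) y z = solidT p m 0 x y z := by
  unfold solidT
  have hsq : (((-x) ^ 2 + y ^ 2 + z ^ 2 : ℝ) : ℂ) = ((x ^ 2 + y ^ 2 + z ^ 2 : ℝ) : ℂ) := by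
    norm_num
  simp only [Int.natAbs_zero, pow_zero, hsq]

lemma solidT_q0_negy (p m : ℕ) (x y z : ℝ) :
    solidT p m 0 x (-y) z = solidT p m 0 x y z := by
  unfold solidT
  have hsq : ((x ^ 2 + (-y) ^ 2 + z ^ 2 : ℝ) : ℂ) = ((x ^ 2 + y ^ 2 + z ^ 2 : ℝ) : ℂ) := by
    norm_num
  simp only [Int.natAbs_zero, pow_zero, hsq]

lemma integral_zero_of_odd2 (f : ℝ → ℝ → ℂ) (h : ∀ x y, f (-x) (-y) = - f x y) :
    (∫ x in (-1:ℝ)..1, ∫ y in (-1:ℝ)..1, f x y) = 0 := by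
  apply integral_zero_of_odd
  intro x
  have h1 : ∀ y : ℝ, f (-x) y = -f x (-y) := by
    intro y
    have := h x (-y)
    rwa [neg_neg] at this
  calc (∫ y in (-1:ℝ)..1, f (-x) y) = ∫ y in (-1:ℝ)..1, -f x (-y) := by simp only [h1]
    _ = -∫ y in (-1:ℝ)..1, f x (-y) := intervalIntegral.integral_neg
    _ = -∫ y in (-1:ℝ)..1, f x y := by rw [integral_comp_neg_sym (f x)]

theorem solidI_vanishes_of_oddity (φ : ℕ → Polynomial ℝ)
    (hdeg : ∀ k : ℕ, (φ k).degree = k)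
    (horth : ∀ j k : ℕ, j ≠ k →
      ∫ ζ in (-1:ℝ)..1, (φ j).eval ζ * (φ k).eval ζ = 0)
    (p : ℕ) (q : ℤ) (hq : q.natAbs ≤ p) (k₁ k₂ k₃ : ℕ)
    (hodd : Odd (k₃ + p + q.natAbs) ∨ Odd (k₁ + k₂ + q.natAbs) ∨
      (q = 0 ∧ (Odd k₁ ∨ Odd k₂))) :
    ∀ m : ℕ, solidI φ p m q k₁ k₂ k₃ = 0 := by
  intro m
  have hphi : ∀ (k : ℕ) (x : ℝ), (φ k).eval (-x) = (-1:ℝ)^k * (φ k).eval x :=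
    phi_parity φ hdeg horth
  unfold solidI
  rcases hodd with h3 | h12 | ⟨hq0, hk⟩
  · -- Odd (k₃ + p + |q|): innermost integral vanishes
    have hz : ∀ x₁ x₂ : ℝ, (∫ x₃ in (-1:ℝ)..1, solidT p m q x₁ x₂ x₃ *
        (((φ k₁).eval x₁ * (φ k₂).eval x₂ * (φ k₃).eval x₃ : ℝ) : ℂ)) = 0 := by
      intro x₁ x₂
      apply integral_zero_of_odd
      intro x
      rw [solidT_neg_z p m q hq, hphi k₃]
      have hsgn : (-1:ℂ) ^ (p + q.natAbs) * (-1:ℂ) ^ k₃ = -1 := by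
        rw [← pow_add]
        refine Odd.neg_one_pow ?_
        rw [Nat.odd_iff] at h3 ⊢; omega
      push_cast
      linear_combination (solidT p m q x₁ x₂ x * ((((φ k₁).eval x₁ : ℝ) : ℂ) *
        (((φ k₂).eval x₂ : ℝ) : ℂ) * (((φ k₃).eval x : ℝ) : ℂ))) * hsgn
    simp only [hz, intervalIntegral.integral_zero]
  · -- Odd (k₁ + k₂ + |q|)
    refine integral_zero_of_odd2 (fun x₁ x₂ => ∫ x₃ in (-1:ℝ)..1, solidT p m q x₁ x₂ x₃ *
      (((φ k₁).eval x₁ * (φ k₂).eval x₂ * (φ k₃).eval x₃ : ℝ) : ℂ)) (fun x₁ x₂ => ?_)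
    rw [← intervalIntegral.integral_neg]
    refine intervalIntegral.integral_congr fun x₃ _ => ?_
    rw [solidT_neg_xy p m q x₁ x₂ x₃, hphi k₁, hphi k₂]
    have hsgn : (-1:ℂ) ^ q.natAbs * ((-1:ℂ) ^ k₁ * (-1:ℂ) ^ k₂) = -1 := by
      rw [← pow_add, ← pow_add]
      refine Odd.neg_one_pow ?_
      rw [Nat.odd_iff] at h12 ⊢; omega
    push_cast
    linear_combination (solidT p m q x₁ x₂ x₃ * ((((φ k₁).eval x₁ : ℝ) : ℂ) *
      (((φ k₂).eval x₂ : ℝ) : ℂ) * (((φ k₃).eval x₃ : ℝ) : ℂ))) * hsgn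
  · subst hq0
    rcases hk with hk1 | hk2
    · -- Odd k₁ : outermost integral of an odd function
      apply integral_zero_of_odd
      intro x₁
      have hpt : ∀ x₂ x₃ : ℝ, solidT p m 0 (-x₁) x₂ x₃ *
          (((φ k₁).eval (-x₁) * (φ k₂).eval x₂ * (φ k₃).eval x₃ : ℝ) : ℂ)
          = -(solidT p m 0 x₁ x₂ x₃ *
          (((φ k₁).eval x₁ * (φ k₂).eval x₂ * (φ k₃).eval x₃ : ℝ) : ℂ)) := by
        intro x₂ x₃
        rw [solidT_q0_negx, hphi k₁, hk1.neg_one_pow]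
        push_cast
        ring
      simp only [hpt, intervalIntegral.integral_neg]
    · -- Odd k₂ : middle integral vanishes for each x₁
      have hz : ∀ x₁ : ℝ, (∫ x₂ in (-1:ℝ)..1, ∫ x₃ in (-1:ℝ)..1, solidT p m 0 x₁ x₂ x₃ *
          (((φ k₁).eval x₁ * (φ k₂).eval x₂ * (φ k₃).eval x₃ : ℝ) : ℂ)) = 0 := by
        intro x₁
        apply integral_zero_of_odd
        intro x₂
        have hpt : ∀ x₃ : ℝ, solidT p m 0 x₁ (-x₂) x₃ *
            (((φ k₁).eval x₁ * (φ k₂).eval (-x₂) * (φ k₃).eval x₃ : ℝ) : ℂ)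
            = -(solidT p m 0 x₁ x₂ x₃ *
            (((φ k₁).eval x₁ * (φ k₂).eval x₂ * (φ k₃).eval x₃ : ℝ) : ℂ)) := by
          intro x₃
          rw [solidT_q0_negy, hphi k₂, hk2.neg_one_pow]
          push_cast
          ring
        simp only [hpt, intervalIntegral.integral_neg]
      simp only [hz, intervalIntegral.integral_zero]
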